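/- Let r_c = exp(-π/√3) and let 0 < r < r_c. Let β ∈ (0, 1/6) satisfy -3β·log(r) + log(2·sin(π(1/6 - β))) = 0, and set α = -β - 2/3. Then (π/3)·(sin(πα) + √3·cos(πα)) - 2·cos(π(β + 1/3))·log(r) < 0. -/

import Mathlib

open Real Set

lemma aux_g_pos (t : ℝ) (h1 : Real.pi/3 < t) (h2 : t < Real.pi/2) :
    0 < (t - Real.pi/3) * Real.sin t + Real.cos t * Real.log (2 * Real.cos t) := by
  have hπ := Real.pi_pos
  set g : ℝ → ℝ := fun x => (x - Real.pi/3) * Real.sin x + Real.cos x * Real.log (2 * Real.cos x)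
    with hg
  have hcos : ∀ x ∈ Set.Icc (Real.pi/3) t, 0 < Real.cos x := by
    intro x hx
    apply Real.cos_pos_of_mem_Ioo
    constructor
    · nlinarith [hx.1]
    · linarith [hx.2]
  have hcont : ContinuousOn g (Set.Icc (Real.pi/3) t) := by
    apply ContinuousOn.add
    · exact ((continuousOn_id.sub continuousOn_const).mul Real.continuous_sin.continuousOn)
    · apply Real.continuous_cos.continuousOn.mul
      apply ContinuousOn.log (continuousOn_const.mul Real.continuous_cos.continuousOn)
      intro x hx
      have := hcos x hx
      exact mul_ne_zero two_ne_zero this.ne'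
  have hderiv : ∀ x ∈ Set.Ioo (Real.pi/3) t,
      HasDerivAt g ((x - Real.pi/3) * Real.cos x - Real.sin x * Real.log (2 * Real.cos x)) x := by
    intro x hx
    have hcx : 0 < Real.cos x := hcos x ⟨le_of_lt hx.1, le_of_lt hx.2⟩
    have hne : (2 : ℝ) * Real.cos x ≠ 0 := by positivity
    have d1 : HasDerivAt (fun x : ℝ => (x - Real.pi/3) * Real.sin x)
        (1 * Real.sin x + (x - Real.pi/3) * Real.cos x) x :=
      ((hasDerivAt_id x).sub_const _).mul (Real.hasDerivAt_sin x)
    have d2 : HasDerivAt (fun x : ℝ => 2 * Real.cos x) (2 * (-Real.sin x)) x :=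
      (Real.hasDerivAt_cos x).const_mul 2
    have d3 : HasDerivAt (fun x : ℝ => Real.log (2 * Real.cos x))
        ((2 * (-Real.sin x)) / (2 * Real.cos x)) x := d2.log hne
    have d4 : HasDerivAt (fun x : ℝ => Real.cos x * Real.log (2 * Real.cos x))
        (-Real.sin x * Real.log (2 * Real.cos x) +
          Real.cos x * ((2 * (-Real.sin x)) / (2 * Real.cos x))) x :=
      (Real.hasDerivAt_cos x).mul d3
    have : HasDerivAt g (1 * Real.sin x + (x - Real.pi/3) * Real.cos x +
        (-Real.sin x * Real.log (2 * Real.cos x) +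
          Real.cos x * ((2 * (-Real.sin x)) / (2 * Real.cos x)))) x := d1.add d4
    convert this using 1
    have : Real.cos x * ((2 * (-Real.sin x)) / (2 * Real.cos x)) = -Real.sin x := by
      field_simp
    rw [this]
    ring
  have hmono : StrictMonoOn g (Set.Icc (Real.pi/3) t) := by
    apply strictMonoOn_of_deriv_pos (convex_Icc _ _) hcont
    intro x hx
    rw [interior_Icc] at hx
    rw [(hderiv x hx).deriv]
    have hcx : 0 < Real.cos x := hcos x ⟨le_of_lt hx.1, le_of_lt hx.2⟩
    have hsx : 0 < Real.sin x := Real.sin_pos_of_pos_of_lt_pi (by linarith [hx.1]) (by linarith [hx.2])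
    have hclt : Real.cos x < 1/2 := by
      have := Real.cos_lt_cos_of_nonneg_of_le_pi (by positivity) (by linarith [hx.2]) hx.1
      rwa [Real.cos_pi_div_three] at this
    have hlog : Real.log (2 * Real.cos x) < 0 :=
      Real.log_neg (by positivity) (by linarith)
    nlinarith [hx.1]
  have hgval : g (Real.pi/3) = 0 := by
    simp only [hg, sub_self, zero_mul, Real.cos_pi_div_three]
    norm_num
  have := hmono (Set.left_mem_Icc.mpr (le_of_lt h1)) (Set.right_mem_Icc.mpr (le_of_lt h1)) h1
  rw [hgval] at this
  exact this

theorem flux_constant_neg_subcritical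
    (r β α : ℝ) (hr0 : 0 < r) (hrc : r < Real.exp (-Real.pi / Real.sqrt 3))
    (hβ : β ∈ Set.Ioo (0 : ℝ) (1/6))
    (heq : -3 * β * Real.log r + Real.log (2 * Real.sin (Real.pi * (1/6 - β))) = 0)
    (hα : α = -β - 2/3) :
    (Real.pi / 3) * (Real.sin (Real.pi * α) + Real.sqrt 3 * Real.cos (Real.pi * α)) -
      2 * Real.cos (Real.pi * (β + 1/3)) * Real.log r < 0 := by
  have hπ := Real.pi_pos
  obtain ⟨hβ0, hβ6⟩ := hβ
  set t := Real.pi * (β + 1/3) with ht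
  have ht1 : Real.pi/3 < t := by rw [ht]; nlinarith
  have ht2 : t < Real.pi/2 := by rw [ht]; nlinarith
  -- sin(π(1/6-β)) = cos t
  have hsc : Real.sin (Real.pi * (1/6 - β)) = Real.cos t := by
    have : Real.pi * (1/6 - β) = Real.pi/2 - t := by rw [ht]; ring
    rw [this, Real.sin_pi_div_two_sub]
  rw [hsc] at heq
  -- key trig identity
  have hsin3 := Real.sin_pi_div_three
  have hcos3 := Real.cos_pi_div_three
  have hπα : Real.pi * α = -(t + Real.pi/3) := by rw [hα, ht]; ring
  have hsina : Real.sin (Real.pi * α) = -(Real.sin t * (1/2) + Real.cos t * (Real.sqrt 3 / 2)) := by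
    rw [hπα, Real.sin_neg, Real.sin_add, hsin3, hcos3]
  have hcosa : Real.cos (Real.pi * α) = Real.cos t * (1/2) - Real.sin t * (Real.sqrt 3 / 2) := by
    rw [hπα, Real.cos_neg, Real.cos_add, hsin3, hcos3]
  have hsq : Real.sqrt 3 * Real.sqrt 3 = 3 := Real.mul_self_sqrt (by norm_num)
  have hcomb : Real.sin (Real.pi * α) + Real.sqrt 3 * Real.cos (Real.pi * α) =
      -2 * Real.sin t := by
    rw [hsina, hcosa]; linear_combination (-(Real.sin t)/2) * hsq
  rw [hcomb]
  -- key inequality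
  have hkey := aux_g_pos t ht1 ht2
  have hlogeq : Real.log (2 * Real.cos t) = 3 * β * Real.log r := by linarith
  have htβ : t - Real.pi/3 = Real.pi * β := by rw [ht]; ring
  rw [hlogeq, htβ] at hkey
  -- hkey : 0 < π β sin t + cos t * (3 β log r)
  have hst : 0 < Real.sin t := Real.sin_pos_of_pos_of_lt_pi (by linarith) (by linarith)
  have hfin : 0 < Real.pi * Real.sin t + 3 * Real.cos t * Real.log r := by
    nlinarith [hkey, hβ0]
  nlinarith [hfin]
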